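/- Let n ≥ 6 and let r be an integer with r ≥ 3 and 2r ≤ n. Then in S_n the following exchange law holds: v_{2r} · u_{2r} = ∏_{i=2}^{r-1} (u_{2i} · t_{2i+1}^{-1}) · u_{2r} · v_{2r}, where the product is taken over i = 2, 3, ..., r-1 in increasing order. -/

import Mathlib

/- We work in the symmetric group on `Fin n` (representing `{1, ..., n}` via `i ↦ i - 1`).
The paper multiplies permutations left-to-right: `(π₁ · π₂)(i) = π₂(π₁(i))`,
while Mathlib's `*` on `Equiv.Perm` is function composition: `(π₁ * π₂)(i) = π₁(π₂(i))`.
Hence a paper product `A · B · C` is rendered below as `C * B * A`. -/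

/-- `sP n i` is the transposition `sᵢ = (i, i+1)` (1-indexed), for `1 ≤ i ≤ n - 1`. -/
def sP (n i : ℕ) : Equiv.Perm (Fin n) :=
  if h : 1 ≤ i ∧ i < n then
    Equiv.swap ⟨i - 1, lt_of_le_of_lt (Nat.sub_le i 1) h.2⟩ ⟨i, h.2⟩
  else 1

/-- `tP n m` is `t_m = s₁ · s₂ ⋯ s_{m-1}` (paper's left-to-right product, so here the
factor for larger index is multiplied on the left).  `tP n 0 = tP n 1 = 1`. -/
def tP (n m : ℕ) : Equiv.Perm (Fin n) :=
  (List.range (m - 1)).foldl (fun g j => sP n (j + 1) * g) 1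

/-- `uP n r` is `u_{2r} = t_{2r-2} · s_{2r-1}` (paper order; here reversed). -/
def uP (n r : ℕ) : Equiv.Perm (Fin n) := sP n (2 * r - 1) * tP n (2 * r - 2)

/-- `vP n r` is `v_{2r} = t_{2r}²`. -/
def vP (n r : ℕ) : Equiv.Perm (Fin n) := (tP n (2 * r)) ^ 2

lemma sP_apply (n i : ℕ) (h1 : 1 ≤ i) (h2 : i < n) (x : Fin n) :
    (sP n i x).val = if x.val = i - 1 then i else if x.val = i then i - 1 else x.val := by
  have : (1 ≤ i ∧ i < n) := ⟨h1, h2⟩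
  simp only [sP, dif_pos this, Equiv.swap_apply_def, Fin.ext_iff]
  split_ifs <;> simp_all <;> omega

lemma tP_succ (n m : ℕ) (hm : 1 ≤ m) : tP n (m + 1) = sP n m * tP n m := by
  obtain ⟨k, rfl⟩ : ∃ k, m = k + 1 := ⟨m - 1, by omega⟩
  simp [tP, List.range_succ]

lemma tP_apply (n m : ℕ) (hm : m ≤ n) (x : Fin n) :
    (tP n m x).val =
      if 1 ≤ x.val ∧ x.val < m then x.val - 1
      else if x.val = 0 ∧ 2 ≤ m then m - 1
      else x.val := by
  have hx := x.isLt
  induction m with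
  | zero =>
    have h0 : tP n 0 = 1 := rfl
    simp only [h0, Equiv.Perm.one_apply]
    split_ifs <;> omega
  | succ m ih =>
    rcases Nat.eq_zero_or_pos m with rfl | hm1
    · have h0 : tP n 1 = 1 := rfl
      simp only [h0, Equiv.Perm.one_apply]
      split_ifs <;> omega
    · rw [tP_succ n m hm1, Equiv.Perm.mul_apply,
        sP_apply n m hm1 (by omega), ih (by omega)]
      split_ifs <;> omega

lemma tP_inv_apply (n m : ℕ) (hm : m ≤ n) (x : Fin n) :
    ((tP n m)⁻¹ x).val =
      if x.val + 2 ≤ m then x.val + 1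
      else if x.val + 1 = m ∧ 2 ≤ m then 0
      else x.val := by
  have h := tP_apply n m hm ((tP n m)⁻¹ x)
  rw [show (tP n m) ((tP n m)⁻¹ x) = x from (tP n m).apply_symm_apply x] at h
  have h1 := ((tP n m)⁻¹ x).isLt
  have h2 := x.isLt
  split_ifs at h ⊢ <;> omega

lemma uP_apply (n r : ℕ) (hr : 2 ≤ r) (h : 2 * r ≤ n) (x : Fin n) :
    (uP n r x).val =
      if x.val = 0 then 2 * r - 3
      else if x.val ≤ 2 * r - 3 then x.val - 1
      else if x.val = 2 * r - 2 then 2 * r - 1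
      else if x.val = 2 * r - 1 then 2 * r - 2
      else x.val := by
  have hx := x.isLt
  rw [uP, Equiv.Perm.mul_apply, sP_apply n (2 * r - 1) (by omega) (by omega),
    tP_apply n (2 * r - 2) (by omega)]
  split_ifs <;> first | contradiction | omega

lemma vP_apply (n r : ℕ) (hr : 2 ≤ r) (h : 2 * r ≤ n) (x : Fin n) :
    (vP n r x).val =
      if x.val = 0 then 2 * r - 2
      else if x.val = 1 then 2 * r - 1
      else if x.val ≤ 2 * r - 1 then x.val - 2
      else x.val := by
  have hx := x.isLt
  rw [vP, sq, Equiv.Perm.mul_apply, tP_apply n (2 * r) (by omega),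
    tP_apply n (2 * r) (by omega)]
  have h2 := (tP n (2 * r) x).isLt
  split_ifs <;> first | contradiction | omega

lemma uv_apply (n r : ℕ) (hr : 2 ≤ r) (h : 2 * r ≤ n) (x : Fin n) :
    (uP n r (vP n r x)).val =
      if x.val = 0 then 2 * r - 1
      else if x.val = 1 then 2 * r - 2
      else if x.val = 2 then 2 * r - 3
      else if x.val ≤ 2 * r - 1 then x.val - 3
      else x.val := by
  have hx := x.isLt
  rw [uP_apply n r hr h, vP_apply n r hr h]
  split_ifs <;> first | contradiction | omega

lemma conj_apply (n r : ℕ) (hr : 2 ≤ r) (h : 2 * r ≤ n) (x : Fin n) :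
    ((vP n r)⁻¹ (uP n r (vP n r x))).val =
      if x.val = 0 then 1
      else if x.val = 1 then 0
      else if x.val = 2 then 2 * r - 1
      else if x.val ≤ 2 * r - 1 then x.val - 1
      else x.val := by
  have hx := x.isLt
  have hi : (vP n r)⁻¹ = (tP n (2 * r))⁻¹ * (tP n (2 * r))⁻¹ := by
    rw [vP, sq, mul_inv_rev]
  rw [hi, Equiv.Perm.mul_apply, tP_inv_apply n (2 * r) (by omega),
    tP_inv_apply n (2 * r) (by omega), uv_apply n r hr h]
  split_ifs <;> first | contradiction | omega

lemma w2_apply (n r : ℕ) (hr : 2 ≤ r) (h : 2 * r + 2 ≤ n) (x : Fin n) :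
    ((tP n (2 * r + 1))⁻¹ ((vP n r)⁻¹ (uP n r (vP n r x)))).val =
      if x.val = 0 then 2
      else if x.val = 2 then 2 * r
      else if x.val = 2 * r then 0
      else x.val := by
  have hx := x.isLt
  rw [tP_inv_apply n (2 * r + 1) (by omega), conj_apply n r hr (by omega)]
  split_ifs <;> first | contradiction | omega

lemma w3_apply (n r : ℕ) (hr : 2 ≤ r) (h : 2 * r + 2 ≤ n) (x : Fin n) :
    (uP n (r + 1) ((tP n (2 * r + 1))⁻¹ ((vP n r)⁻¹ (uP n r (vP n r x))))).val =
      if x.val = 0 then 1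
      else if x.val = 1 then 0
      else if x.val = 2 then 2 * r + 1
      else if x.val ≤ 2 * r + 1 then x.val - 1
      else x.val := by
  have hx := x.isLt
  rw [uP_apply n (r + 1) (by omega) (by omega), w2_apply n r hr h]
  split_ifs <;> first | contradiction | omega

lemma step (n r : ℕ) (hr : 2 ≤ r) (h : 2 * r + 2 ≤ n) :
    uP n (r + 1) * vP n (r + 1) =
      vP n (r + 1) * (uP n (r + 1) *
        ((tP n (2 * r + 1))⁻¹ * ((vP n r)⁻¹ * (uP n r * vP n r)))) := by
  refine Equiv.ext fun x => Fin.ext ?_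
  simp only [Equiv.Perm.mul_apply]
  rw [uv_apply n (r + 1) (by omega) (by omega),
    vP_apply n (r + 1) (by omega) (by omega), w3_apply n r hr h]
  have hx := x.isLt
  split_ifs <;> first | contradiction | omega

lemma conj_two (n : ℕ) (h : 4 ≤ n) :
    (vP n 2)⁻¹ * (uP n 2 * vP n 2) = uP n 2 := by
  refine Equiv.ext fun x => Fin.ext ?_
  simp only [Equiv.Perm.mul_apply]
  rw [conj_apply n 2 le_rfl h, uP_apply n 2 le_rfl h]
  have hx := x.isLt
  split_ifs <;> first | contradiction | omega

/-- for `r ≥ 3` with `2r ≤ n`,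
`v_{2r} · u_{2r} = ∏_{i=2}^{r-1} (u_{2i} · t_{2i+1}⁻¹) · u_{2r} · v_{2r}` (paper
left-to-right product over `i` increasing; rendered here in composition order, i.e.
everything reversed).  The index `j ∈ range (r-2)` corresponds to `i = j + 2`. -/
theorem vu_exchange (n r : ℕ) (hn : 6 ≤ n) (hr : 3 ≤ r) (hrn : 2 * r ≤ n) :
    uP n r * vP n r =
      vP n r * uP n r *
        (List.range (r - 2)).foldl
          (fun acc j => (tP n (2 * (j + 2) + 1))⁻¹ * uP n (j + 2) * acc) 1 := by
  have key : ∀ s : ℕ, 3 ≤ s → 2 * s ≤ n →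
      uP n s * vP n s =
        vP n s * uP n s *
          (List.range (s - 2)).foldl
            (fun acc j => (tP n (2 * (j + 2) + 1))⁻¹ * uP n (j + 2) * acc) 1 := by
    intro s hs
    induction s, hs using Nat.le_induction with
    | base =>
      intro h6
      have hs := step n 2 le_rfl (by omega)
      norm_num at hs
      rw [conj_two n (by omega)] at hs
      have hr1 : List.range (3 - 2) = [0] := rfl
      rw [hr1, List.foldl_cons, List.foldl_nil]
      norm_num
      rw [hs]
      group
    | succ s hs3 ih =>
      intro h
      have ih' := ih (by omega)
      have hsplit : s + 1 - 2 = (s - 2) + 1 := by omega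
      rw [hsplit, List.range_succ, List.foldl_append, List.foldl_cons, List.foldl_nil]
      rw [show s - 2 + 2 = s from by omega]
      have hPval : (List.range (s - 2)).foldl
          (fun acc j => (tP n (2 * (j + 2) + 1))⁻¹ * uP n (j + 2) * acc) 1
          = (vP n s * uP n s)⁻¹ * (uP n s * vP n s) := by
        rw [ih']; group
      rw [hPval, step n s (by omega) (by omega)]
      group
  exact key r hr hrn
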